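/- For each s ∈ (0, s̄), the point γ(s) defined by the recursion γ_n(s) = s, γ_i(s) = s/(1 - γ_{i+1}(s)) for 1 ≤ i ≤ n-1, γ_0(s) = λ_c s/(λ(1 - γ_1(s))), γ_{n+1}(s) = (Gλ_c/ν)s is an equilibrium of the transcription flow model f_1, i.e., f_1(γ(s)) = 0. -/

import Mathlib

/-- The point `γ(s)` defined by the continued-fraction recursion
is an equilibrium of the transcription flow model `f₁`, i.e. every component
of the vector field vanishes at `γ(s)`. -/
theorem gamma_is_equilibrium
    (n : ℕ) (hn : 2 ≤ n) (G lam lamc nu : ℝ)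
    (hG : 0 < G) (hlam : 0 < lam) (hlamc : 0 < lamc) (hnu : 0 < nu)
    (sbar s : ℝ) (hs : s ∈ Set.Ioo 0 sbar)
    (γ : ℕ → ℝ)
    (hγn : γ n = s)
    (hγmid : ∀ i, 1 ≤ i → i ≤ n - 1 → γ i = s / (1 - γ (i + 1)))
    (hγ0 : γ 0 = lamc * s / (lam * (1 - γ 1)))
    (hγlast : γ (n + 1) = (G * lamc / nu) * s)
    (hbound : ∀ i, 1 ≤ i → i ≤ n → γ i ∈ Set.Ioo (0 : ℝ) 1) :
    -- f₁(γ(s)) = 0, componentwise: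
    (-G * lam * γ 0 * (1 - γ 1) + G * lamc * γ n = 0) ∧
    (lam * γ 0 * (1 - γ 1) - lamc * γ 1 * (1 - γ 2) = 0) ∧
    (∀ i, 2 ≤ i → i ≤ n - 1 →
      lamc * γ (i - 1) * (1 - γ i) - lamc * γ i * (1 - γ (i + 1)) = 0) ∧
    (lamc * γ (n - 1) * (1 - γ n) - lamc * γ n = 0) ∧
    (G * lamc * γ n - nu * γ (n + 1) = 0) := by
  -- key: for 1 ≤ i ≤ n-1, γ i * (1 - γ (i+1)) = s
  have key : ∀ i, 1 ≤ i → i ≤ n - 1 → γ i * (1 - γ (i + 1)) = s := by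
    intro i h1 h2
    have hle : i + 1 ≤ n := by omega
    have hb := hbound (i + 1) (by omega) hle
    have hne : (1 : ℝ) - γ (i + 1) ≠ 0 := by
      have := hb.2; linarith
    rw [hγmid i h1 h2, div_mul_cancel₀ _ hne]
  have hne1 : (1 : ℝ) - γ 1 ≠ 0 := by
    have := (hbound 1 le_rfl (by omega)).2; linarith
  have h0 : lam * γ 0 * (1 - γ 1) = lamc * s := by
    rw [hγ0]
    field_simp
  have h1 : γ 1 * (1 - γ 2) = s := by
    have := key 1 le_rfl (by omega)
    simpa using this
  have hlast : γ (n - 1) * (1 - γ n) = s := by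
    have := key (n - 1) (by omega) (by omega)
    rw [show n - 1 + 1 = n by omega] at this
    exact this
  refine ⟨?_, ?_, ?_, ?_, ?_⟩
  · have : G * (lam * γ 0 * (1 - γ 1)) = G * (lamc * s) := by rw [h0]
    rw [hγn]; nlinarith [h0]
  · rw [h0]; nlinarith [h1]
  · intro i hi2 hin
    have ha := key (i - 1) (by omega) (by omega)
    rw [show i - 1 + 1 = i by omega] at ha
    have hb := key i (by omega) hin
    calc lamc * γ (i - 1) * (1 - γ i) - lamc * γ i * (1 - γ (i + 1))
        = lamc * (γ (i - 1) * (1 - γ i)) - lamc * (γ i * (1 - γ (i + 1))) := by ring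
      _ = 0 := by rw [ha, hb]; ring
  · calc lamc * γ (n - 1) * (1 - γ n) - lamc * γ n
        = lamc * (γ (n - 1) * (1 - γ n)) - lamc * γ n := by ring
      _ = 0 := by rw [hlast, hγn]; ring
  · rw [hγn, hγlast]; field_simp; ring
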